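/- In U(gl_2(ℂ)) ⊗ U(gl_2(ℂ)), the column-determinant of the matrix whose entries are the matrix of how Casimir acts reduces to commutative computation: specifically, det(Ω_λ(u) − L) equals the determinant of the matrix X(a',b',c') with commuting entries, where a'_k = λ_1E_{11} + λ_2E_{22} + u − m + (k−m)(E_{11}−E_{22}−1) for k = 0,…,m, b'_k = k·(E_{12}E_{21}), c'_k = (m−k+1) for k = 1,…,m. -/

import Mathlib

open Polynomial

attribute [local instance 100] LieRing.ofAssociativeRing

/-- `E i j` is the image in `U(gl_2(ℂ))` of the matrix unit `E_{ij}`. -/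
noncomputable def E (i j : Fin 2) :
    UniversalEnvelopingAlgebra ℂ (Matrix (Fin 2) (Fin 2) ℂ) :=
  UniversalEnvelopingAlgebra.ι ℂ (Matrix.single i j 1)

/-- Column-determinant of a matrix over a (possibly noncommutative) ring. -/
noncomputable def cdet {𝒜 : Type*} [Ring 𝒜] {n : ℕ} (A : Matrix (Fin n) (Fin n) 𝒜) : 𝒜 :=
  ∑ σ : Equiv.Perm (Fin n),
    (Equiv.Perm.sign σ : ℤ) • (List.ofFn (fun j => A (σ j) j)).prod

/-- Tridiagonal matrix with diagonal a_m,…,a_0 (top-left to bottom-right),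
superdiagonal b_m,…,b_1, subdiagonal c_m,…,c_1. -/
def trid {𝒜 : Type*} [Ring 𝒜] (m : ℕ) (a b c : ℕ → 𝒜) :
    Matrix (Fin (m+1)) (Fin (m+1)) 𝒜 :=
  fun i j =>
    if (i : ℕ) = (j : ℕ) then a (m - (i : ℕ))
    else if (i : ℕ) + 1 = (j : ℕ) then b (m - (i : ℕ))
    else if (j : ℕ) + 1 = (i : ℕ) then c (m - (j : ℕ))
    else 0

section Aux
variable {R : Type*} [Ring R]

lemma cdet_one_dim (A : Matrix (Fin 1) (Fin 1) R) : cdet A = A 0 0 := by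
  rw [cdet, Fintype.sum_subsingleton _ (1 : Equiv.Perm (Fin 1))]
  simp [List.ofFn_succ]

lemma cdet_zero_row {n : ℕ} (N : Matrix (Fin (n+1)) (Fin (n+1)) R) (i0 : Fin (n+1))
    (h : ∀ j, N i0 j = 0) : cdet N = 0 := by
  rw [cdet]
  refine Finset.sum_eq_zero fun σ _ => ?_
  rw [List.prod_eq_zero, smul_zero]
  rw [List.mem_ofFn]
  exact ⟨σ⁻¹ i0, by simp [h]⟩

lemma cdet_expand {n : ℕ} (A : Matrix (Fin (n+1)) (Fin (n+1)) R) :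
    cdet A = ∑ p : Fin (n+1), ((if p = 0 then 1 else -1 : ℤ)) •
      (A p 0 * cdet (fun i j => A (Equiv.swap 0 p i.succ) j.succ)) := by
  rw [cdet, ← Equiv.sum_comp (Equiv.Perm.decomposeFin (n := n)).symm, Fintype.sum_prod_type]
  refine Finset.sum_congr rfl fun p _ => ?_
  simp only [cdet, Finset.mul_sum, Finset.smul_sum]
  refine Finset.sum_congr rfl fun e _ => ?_
  rw [Equiv.Perm.decomposeFin.symm_sign]
  simp only [List.ofFn_succ, List.prod_cons, Equiv.Perm.decomposeFin_symm_apply_zero,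
    Equiv.Perm.decomposeFin_symm_apply_succ]
  push_cast
  rw [mul_smul, mul_smul_comm]
  split_ifs <;> simp

end Aux

section Aux2
variable {R : Type*} [Ring R] (a b c : ℕ → R)

lemma trid_eq_zero {m : ℕ} (i j : Fin (m+1)) (h1 : (i:ℕ) ≠ j) (h2 : (i:ℕ)+1 ≠ j)
    (h3 : (j:ℕ)+1 ≠ i) : trid m a b c i j = 0 := by
  simp only [trid, if_neg h1, if_neg h2, if_neg h3]

lemma trid_succ_succ {m : ℕ} (i j : Fin (m+1)) :
    trid (m+1) a b c i.succ j.succ = trid m a b c i j := by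
  simp only [trid, Fin.val_succ, add_left_inj, Nat.add_sub_add_right]

lemma trid_zero_zero (m : ℕ) : trid m a b c 0 0 = a m := by
  simp [trid]

lemma trid_one_zero (m : ℕ) : trid (m+1) a b c 1 0 = c (m+1) := by
  simp [trid]

lemma trid_zero_one (m : ℕ) : trid (m+1) a b c 0 1 = b (m+1) := by
  simp [trid]

lemma cdet_trid_zero : cdet (trid 0 a b c) = a 0 := by
  rw [cdet_one_dim, trid_zero_zero]

lemma cdet_trid_one : cdet (trid 1 a b c) = a 1 * a 0 - c 1 * b 1 := by
  rw [cdet_expand, Fin.sum_univ_two]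
  have h11 : trid 1 a b c 1 1 = a 0 := by simp [trid]
  erw [cdet_one_dim, cdet_one_dim]
  simp [cdet_one_dim, Equiv.swap_apply_left, trid_zero_zero, trid_one_zero, trid_zero_one,
    h11, sub_eq_add_neg]

lemma cdet_B (n : ℕ) :
    cdet (fun i j : Fin (n+2) => trid (n+2) a b c (Equiv.swap 0 1 i.succ) j.succ)
      = b (n+2) * cdet (trid n a b c) := by
  erw [cdet_expand, Fin.sum_univ_succ]
  have hz : ∀ q : Fin (n+1),
      cdet (fun i j : Fin (n+1) =>
        trid (n+2) a b c (Equiv.swap 0 1 ((Equiv.swap 0 q.succ) i.succ).succ) j.succ.succ)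
        = 0 := by
    intro q
    refine cdet_zero_row _ q fun j => ?_
    rw [Equiv.swap_apply_right, Fin.succ_zero_eq_one, Equiv.swap_apply_right]
    exact trid_eq_zero a b c _ _ (by simp [Fin.val_succ]) (by simp [Fin.val_succ])
      (by simp [Fin.val_succ])
  simp only [hz, mul_zero, smul_zero, Finset.sum_const_zero, add_zero,
    Equiv.swap_self, Equiv.refl_apply, if_pos rfl, one_smul, Fin.succ_zero_eq_one]
  rw [Equiv.swap_apply_right, trid_zero_one]
  have hm : (fun i j : Fin (n+1) =>
      trid (n+2) a b c (Equiv.swap 0 1 i.succ.succ) j.succ.succ) = trid n a b c := by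
    funext i j
    rw [show (Equiv.swap (0 : Fin (n+3)) 1) i.succ.succ = i.succ.succ from
      Equiv.swap_apply_of_ne_of_ne (Fin.succ_ne_zero _)
        (by rw [Ne, Fin.ext_iff, Fin.val_succ, Fin.val_succ, Fin.val_one]; omega)]
    rw [trid_succ_succ, trid_succ_succ]
  rw [hm]
  simp

lemma cdet_trid_rec (n : ℕ) :
    cdet (trid (n+2) a b c) =
      a (n+2) * cdet (trid (n+1) a b c) - c (n+2) * (b (n+2) * cdet (trid n a b c)) := by
  rw [cdet_expand, Fin.sum_univ_succ, Fin.sum_univ_succ]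
  have hz : ∀ q : Fin (n+1), trid (n+2) a b c q.succ.succ 0 = 0 := fun q =>
    trid_eq_zero _ _ _ _ _ (by simp) (by simp) (by simp [Fin.val_succ])
  simp only [hz, zero_mul, smul_zero, Finset.sum_const_zero, add_zero, if_true,
    Equiv.swap_self, Equiv.refl_apply]
  rw [if_neg (Fin.succ_ne_zero (0 : Fin (n+2))), Fin.succ_zero_eq_one]
  rw [trid_zero_zero, trid_one_zero]
  have hminor0 : (fun i j : Fin (n+2) => trid (n+2) a b c i.succ j.succ) = trid (n+1) a b c := by
    funext i j; exact trid_succ_succ a b c i j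
  rw [hminor0, cdet_B a b c n]
  simp [sub_eq_add_neg]


lemma cdet_trid_congr (a' b' c' : ℕ → R) (ha : ∀ k, a k = a' k)
    (hcb : ∀ k, c k * b k = c' k * b' k) (m : ℕ) :
    cdet (trid m a b c) = cdet (trid m a' b' c') := by
  induction m using Nat.strong_induction_on with
  | _ m ih =>
    match m with
    | 0 => rw [cdet_trid_zero, cdet_trid_zero, ha]
    | 1 => rw [cdet_trid_one, cdet_trid_one, ha, ha, hcb]
    | (n+2) =>
      rw [cdet_trid_rec, cdet_trid_rec, ha, ih (n+1) (by omega), ih n (by omega),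
        ← mul_assoc, ← mul_assoc, hcb]

end Aux2

/-- The matrix Ω_λ(u) − L: tridiagonal with a_k = (λ_1+k−m)E_{11}+(λ_2+m−k)E_{22}+u−k,
b_k = kE_{21}, c_k = (m−k+1)E_{12}. -/
noncomputable def OmegaShift (lam1 lam2 : ℤ) (m : ℕ) :
    Matrix (Fin (m+1)) (Fin (m+1))
      (Polynomial (UniversalEnvelopingAlgebra ℂ (Matrix (Fin 2) (Fin 2) ℂ))) :=
  trid m
    (fun k => (lam1 + k - m) • C (E 0 0) + (lam2 + (m : ℤ) - k) • C (E 1 1) + X -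
      ((k : ℂ) • 1))
    (fun k => k • C (E 1 0))
    (fun k => ((m - k + 1 : ℕ)) • C (E 0 1))

/-- The column-determinant of Ω_λ(u) − L equals the column-determinant of the tridiagonal
matrix X(a',b',c') with commuting entries, where
a'_k = λ_1E_{11} + λ_2E_{22} + u − m + (k−m)(E_{11}−E_{22}−1), b'_k = k·(E_{12}E_{21}),
c'_k = (m−k+1). -/
theorem stmt14 (lam1 lam2 : ℤ) (hlam : lam2 ≤ lam1) (m : ℕ) (hm : (m : ℤ) = lam1 - lam2) :
    cdet (OmegaShift lam1 lam2 m) =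
      cdet (trid m
        (fun k => lam1 • C (E 0 0) + lam2 • C (E 1 1) + X - ((m : ℂ) • 1) +
          ((k : ℤ) - (m : ℤ)) • (C (E 0 0) - C (E 1 1) - 1))
        (fun k => k • C (E 0 1 * E 1 0))
        (fun k => ((m - k + 1 : ℕ) : ℂ) • 1)) := by
  rw [OmegaShift]
  refine cdet_trid_congr _ _ _ _ _ _ (fun k => ?_) (fun k => ?_) m
  · rw [show ((k : ℂ) • (1:Polynomial (UniversalEnvelopingAlgebra ℂ (Matrix (Fin 2) (Fin 2) ℂ))))
        = (k : ℤ) • 1 by push_cast [Int.cast_smul_eq_zsmul]; rfl]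
    rw [show ((m : ℂ) • (1:Polynomial (UniversalEnvelopingAlgebra ℂ (Matrix (Fin 2) (Fin 2) ℂ))))
        = (m : ℤ) • 1 by push_cast [Int.cast_smul_eq_zsmul]; rfl]
    module
  · rw [map_mul]
    rw [show (((m - k + 1 : ℕ) : ℂ) • (1:Polynomial (UniversalEnvelopingAlgebra ℂ (Matrix (Fin 2) (Fin 2) ℂ))))
        = (m - k + 1 : ℕ) • 1 by rw [Nat.cast_smul_eq_nsmul]]
    rw [smul_mul_assoc, smul_mul_assoc, one_mul, mul_smul_comm]
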